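/- Let E be a nonzero Banach space and let (⋆_n) be a sequence of unital continuous multiplications on E converging (in the operator norm on bounded bilinear operators) to a continuous multiplication ⋆ that lies in the boundary of Mltp_u(E) inside Mltp(E) (in particular ⋆ is not unital). Then ‖e_{⋆_n}‖ → ∞. -/

import Mathlib

open Filter

/-- The set of continuous multiplications on `E`: associative bounded bilinear operators
`E × E → E`, as a subtype of the space of bounded bilinear operators with the operator-norm
topology. -/
abbrev Mltp (E : Type*) [NormedAddCommGroup E] [NormedSpace ℝ E] :=
  {g : E →L[ℝ] E →L[ℝ] E // ∀ x y z : E, g (g x y) z = g x (g y z)}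

/-- If left multiplication by `e` and right multiplication by `e` are both invertible
operators, then the multiplication has a two-sided unit. -/
lemma aux_unit {E : Type*} [NormedAddCommGroup E] [NormedSpace ℝ E]
    (g : Mltp E) (e : E) (hA : IsUnit (g.1 e)) (hB : IsUnit (g.1.flip e)) :
    ∃ u : E, ∀ x : E, g.1 u x = x ∧ g.1 x u = x := by
  obtain ⟨uA, hAe⟩ := hA
  obtain ⟨uB, hBe⟩ := hB
  set u : E := (↑uA⁻¹ : E →L[ℝ] E) e with hu
  set v : E := (↑uB⁻¹ : E →L[ℝ] E) e with hv
  have hInjA : Function.Injective (g.1 e) := by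
    intro a b hab
    have h1 : ∀ x : E, (↑uA⁻¹ : E →L[ℝ] E) (g.1 e x) = x := by
      intro x
      rw [← hAe, ← ContinuousLinearMap.mul_apply, uA.inv_mul, ContinuousLinearMap.one_apply]
    rw [← h1 a, ← h1 b, hab]
  have hInjB : Function.Injective (g.1.flip e) := by
    intro a b hab
    have h1 : ∀ x : E, (↑uB⁻¹ : E →L[ℝ] E) (g.1.flip e x) = x := by
      intro x
      rw [← hBe, ← ContinuousLinearMap.mul_apply, uB.inv_mul, ContinuousLinearMap.one_apply]
    rw [← h1 a, ← h1 b, hab]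
  have heu : g.1 e u = e := by
    rw [hu, ← hAe, ← ContinuousLinearMap.mul_apply, uA.mul_inv, ContinuousLinearMap.one_apply]
  have hve : g.1 v e = e := by
    have : g.1.flip e v = e := by
      rw [hv, ← hBe, ← ContinuousLinearMap.mul_apply, uB.mul_inv, ContinuousLinearMap.one_apply]
    simpa [ContinuousLinearMap.flip_apply] using this
  have hu_left : ∀ x : E, g.1 u x = x := by
    intro x
    apply hInjA
    rw [← g.2 e u x, heu]
  have hv_right : ∀ x : E, g.1 x v = x := by
    intro x
    apply hInjB
    simp only [ContinuousLinearMap.flip_apply]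
    rw [g.2 x v e, hve]
  have huv : u = v := by rw [← hv_right u, hu_left v]
  exact ⟨u, fun x => ⟨hu_left x, by rw [huv]; exact hv_right x⟩⟩

/-- **Stability of units**: if `g` is unital with unit `e` and `g'` is a multiplication
with `‖g - g'‖ ⬝ ‖e‖ < 1`, then `g'` is unital as well. -/
lemma aux_stab {E : Type*} [NormedAddCommGroup E] [NormedSpace ℝ E] [CompleteSpace E]
    (g g' : Mltp E) (e : E) (he : ∀ x : E, g.1 e x = x ∧ g.1 x e = x)
    (hmul : ‖g.1 - g'.1‖ * ‖e‖ < 1) :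
    ∃ u : E, ∀ x : E, g'.1 u x = x ∧ g'.1 x u = x := by
  have hge : g.1 e = 1 := ContinuousLinearMap.ext fun x => (he x).1
  have hgef : g.1.flip e = 1 := ContinuousLinearMap.ext fun x => by
    simpa [ContinuousLinearMap.flip_apply] using (he x).2
  have hA : IsUnit (g'.1 e) := by
    have hn : ‖(1 : E →L[ℝ] E) - g'.1 e‖ < 1 := by
      calc ‖(1 : E →L[ℝ] E) - g'.1 e‖ = ‖(g.1 - g'.1) e‖ := by rw [← hge]; simp
        _ ≤ ‖g.1 - g'.1‖ * ‖e‖ := ContinuousLinearMap.le_opNorm _ _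
        _ < 1 := hmul
    have := (Units.oneSub ((1 : E →L[ℝ] E) - g'.1 e) hn).isUnit
    simpa using this
  have hB : IsUnit (g'.1.flip e) := by
    have hflip : g.1.flip - g'.1.flip = (g.1 - g'.1).flip := by
      ext x y; simp
    have hn : ‖(1 : E →L[ℝ] E) - g'.1.flip e‖ < 1 := by
      calc ‖(1 : E →L[ℝ] E) - g'.1.flip e‖ = ‖(g.1.flip - g'.1.flip) e‖ := by
            rw [← hgef]; simp
        _ ≤ ‖g.1.flip - g'.1.flip‖ * ‖e‖ := ContinuousLinearMap.le_opNorm _ _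
        _ = ‖g.1 - g'.1‖ * ‖e‖ := by rw [hflip, ContinuousLinearMap.opNorm_flip]
        _ < 1 := hmul
    have := (Units.oneSub ((1 : E →L[ℝ] E) - g'.1.flip e) hn).isUnit
    simpa using this
  exact aux_unit g' e hA hB

/-- The set of unital continuous multiplications is open in `Mltp E`. -/
lemma aux_open {E : Type*} [NormedAddCommGroup E] [NormedSpace ℝ E] [CompleteSpace E] :
    IsOpen {g : Mltp E | ∃ e : E, ∀ x : E, g.1 e x = x ∧ g.1 x e = x} := by
  rw [Metric.isOpen_iff (α := Mltp E)]
  rintro g ⟨e, he⟩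
  refine ⟨(‖e‖ + 1)⁻¹, by positivity, ?_⟩
  intro g' hg'
  have h0 : dist g'.1 g.1 < (‖e‖ + 1)⁻¹ := by
    have := Metric.mem_ball.1 hg'
    rwa [Subtype.dist_eq] at this
  have h1 : dist g'.1 g.1 = ‖g'.1 - g.1‖ :=
    dist_eq_norm (E := E →L[ℝ] E →L[ℝ] E) g'.1 g.1
  have h2 : ‖g'.1 - g.1‖ = ‖g.1 - g'.1‖ :=
    norm_sub_rev (E := E →L[ℝ] E →L[ℝ] E) g'.1 g.1
  have hd : ‖g.1 - g'.1‖ < (‖e‖ + 1)⁻¹ := by rw [← h2, ← h1]; exact h0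
  have hmul : ‖g.1 - g'.1‖ * ‖e‖ < 1 := by
    calc ‖g.1 - g'.1‖ * ‖e‖ ≤ (‖e‖ + 1)⁻¹ * ‖e‖ :=
          mul_le_mul_of_nonneg_right hd.le (norm_nonneg _)
      _ < 1 := by
          rw [inv_mul_lt_iff₀ (by positivity)]
          linarith [norm_nonneg e]
  exact aux_stab g g' e he hmul

/-- Let `E` be a nonzero Banach space and `(F n)` a sequence of unital
continuous multiplications on `E` (with units `eF n`) converging, in `Mltp E`, to a
continuous multiplication `f` lying in the boundary of `Mltp_u(E)` inside `Mltp(E)`.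
Then `‖eF n‖ → ∞`. -/
theorem stmt_13
    {E : Type*} [NormedAddCommGroup E] [NormedSpace ℝ E] [CompleteSpace E] [Nontrivial E]
    (F : ℕ → Mltp E)
    (eF : ℕ → E) (heF : ∀ n, ∀ x : E, (F n).1 (eF n) x = x ∧ (F n).1 x (eF n) = x)
    (f : Mltp E)
    (hfr : f ∈ frontier {g : Mltp E | ∃ e : E, ∀ x : E, g.1 e x = x ∧ g.1 x e = x})
    (hconv : Tendsto F atTop (nhds f)) :
    Tendsto (fun n => ‖eF n‖) atTop atTop := by
  by_contra h
  rw [tendsto_atTop] at h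
  push_neg at h
  obtain ⟨b, hb⟩ := h
  have hbpos : 0 < b := lt_of_le_of_lt (norm_nonneg _) hb.exists.choose_spec
  -- eventually `F n` is within `(b+1)⁻¹` of `f`
  have hev : ∀ᶠ n in atTop, F n ∈ Metric.ball f (b + 1)⁻¹ :=
    hconv.eventually (Metric.ball_mem_nhds f (by positivity))
  obtain ⟨n, hn1, hn2⟩ := (hb.and_eventually hev).exists
  -- transfer to a norm estimate in the ambient space
  have h0 : dist f.1 (F n).1 < (b + 1)⁻¹ := by
    have := Metric.mem_ball.1 hn2
    rw [Subtype.dist_eq] at this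
    have hc : dist f.1 (F n).1 = dist (F n).1 f.1 :=
      dist_comm (α := E →L[ℝ] E →L[ℝ] E) f.1 (F n).1
    rw [hc]; exact this
  have h1 : dist f.1 (F n).1 = ‖f.1 - (F n).1‖ :=
    dist_eq_norm (E := E →L[ℝ] E →L[ℝ] E) f.1 (F n).1
  have h2 : ‖f.1 - (F n).1‖ = ‖(F n).1 - f.1‖ :=
    norm_sub_rev (E := E →L[ℝ] E →L[ℝ] E) f.1 (F n).1
  have hd : ‖(F n).1 - f.1‖ < (b + 1)⁻¹ := by rw [← h2, ← h1]; exact h0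
  -- key estimate for the stability lemma
  have hmul : ‖(F n).1 - f.1‖ * ‖eF n‖ < 1 := by
    calc ‖(F n).1 - f.1‖ * ‖eF n‖ ≤ (b + 1)⁻¹ * ‖eF n‖ :=
          mul_le_mul_of_nonneg_right hd.le (norm_nonneg _)
      _ < 1 := by
          rw [inv_mul_lt_iff₀ (by positivity)]
          linarith
  -- hence `f` is unital
  obtain ⟨u, hu⟩ := aux_stab (F n) f (eF n) (heF n) hmul
  have hfS : f ∈ {g : Mltp E | ∃ e : E, ∀ x : E, g.1 e x = x ∧ g.1 x e = x} := ⟨u, hu⟩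
  -- contradiction: `f` is in the frontier of an open set, hence not in the set
  have hni := hfr.2
  rw [(aux_open (E := E)).interior_eq] at hni
  exact hni hfS
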